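/- Let d ≥ 2 and n = 2d-2. Suppose S ⊆ {1,...,n} satisfies |S| ≤ d-2 and |S ∩ {1,...,2k-2}| ≤ k-1 for all 2 ≤ k ≤ d. Then there exists j ∈ {1,...,n} \ S such that S ∪ {j} also satisfies |（S∪{j}) ∩ {1,...,2k-2}| ≤ k-1 for all 2 ≤ k ≤ d. -/
import Mathlib


theorem good_subset_extend_one (d : ℕ) (hd : 2 ≤ d) (n : ℕ) (hn : n = 2 * d - 2)
    (S : Finset ℕ) (hS : S ⊆ Finset.Icc 1 n) (hScard : S.card ≤ d - 2)
    (hgood : ∀ k, 2 ≤ k → k ≤ d → (S ∩ Finset.Icc 1 (2 * k - 2)).card ≤ k - 1) :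
    ∃ j ∈ Finset.Icc 1 n, j ∉ S ∧
      ∀ k, 2 ≤ k → k ≤ d →
        ((insert j S) ∩ Finset.Icc 1 (2 * k - 2)).card ≤ k - 1 := by
  have hcardIcc : (Finset.Icc 1 n).card = n := by
    rw [Nat.card_Icc]; omega
  have hTne : (Finset.Icc 1 n \ S).Nonempty := by
    rw [← Finset.card_pos, Finset.card_sdiff_of_subset hS, hcardIcc]
    omega
  obtain ⟨j, hjmem, hjmax⟩ := Finset.exists_max_image (Finset.Icc 1 n \ S) id hTne
  obtain ⟨hjIcc, hjS⟩ := Finset.mem_sdiff.mp hjmem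
  refine ⟨j, hjIcc, hjS, fun k hk2 hkd => ?_⟩
  by_cases hcase : j ≤ 2 * k - 2
  · -- all elements of Icc (2k-1) n belong to S
    have hsub : Finset.Icc (2 * k - 1) n ⊆ S := by
      intro m hm
      rw [Finset.mem_Icc] at hm
      by_contra hmS
      have hmT : m ∈ Finset.Icc 1 n \ S := by
        rw [Finset.mem_sdiff, Finset.mem_Icc]
        exact ⟨⟨by omega, hm.2⟩, hmS⟩
      have := hjmax m hmT
      simp only [id] at this
      omega
    -- split S's cardinality
    have hdisj : Disjoint (S ∩ Finset.Icc 1 (2 * k - 2)) (Finset.Icc (2 * k - 1) n) := by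
      rw [Finset.disjoint_left]
      intro a ha hb
      rw [Finset.mem_inter, Finset.mem_Icc] at ha
      rw [Finset.mem_Icc] at hb
      omega
    have hunion : (S ∩ Finset.Icc 1 (2 * k - 2)) ∪ Finset.Icc (2 * k - 1) n ⊆ S := by
      apply Finset.union_subset (Finset.inter_subset_left) hsub
    have hcard2 : (S ∩ Finset.Icc 1 (2 * k - 2)).card + (n - (2 * k - 2)) ≤ S.card := by
      have := Finset.card_le_card hunion
      rw [Finset.card_union_of_disjoint hdisj, Nat.card_Icc] at this
      have : (S ∩ Finset.Icc 1 (2 * k - 2)).card + (n + 1 - (2 * k - 1)) ≤ S.card := this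
      omega
    have hins : ((insert j S) ∩ Finset.Icc 1 (2 * k - 2)).card ≤
        (S ∩ Finset.Icc 1 (2 * k - 2)).card + 1 := by
      have : (insert j S) ∩ Finset.Icc 1 (2 * k - 2) ⊆
          insert j (S ∩ Finset.Icc 1 (2 * k - 2)) := by
        intro a ha
        rw [Finset.mem_inter, Finset.mem_insert] at ha
        rcases ha.1 with h | h
        · rw [h]; exact Finset.mem_insert_self _ _
        · exact Finset.mem_insert_of_mem (Finset.mem_inter.mpr ⟨h, ha.2⟩)
      calc ((insert j S) ∩ Finset.Icc 1 (2 * k - 2)).card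
          ≤ (insert j (S ∩ Finset.Icc 1 (2 * k - 2))).card := Finset.card_le_card this
        _ ≤ (S ∩ Finset.Icc 1 (2 * k - 2)).card + 1 := Finset.card_insert_le _ _
    omega
  · -- j ∉ Icc 1 (2k-2), so intersection unchanged
    have : (insert j S) ∩ Finset.Icc 1 (2 * k - 2) = S ∩ Finset.Icc 1 (2 * k - 2) := by
      ext a
      simp only [Finset.mem_inter, Finset.mem_insert, Finset.mem_Icc]
      constructor
      · rintro ⟨h | h, hb⟩
        · omega
        · exact ⟨h, hb⟩
      · rintro ⟨h, hb⟩; exact ⟨Or.inr h, hb⟩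
    rw [this]
    exact hgood k hk2 hkd
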